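/- Suppose G is a double-critical 8-chromatic graph with minimum degree 10 that contains a vertex x of degree 10 such that the complement of the subgraph induced by the neighbourhood of x has maximum degree at most 2. Then G contains a complete minor on 8 vertices (a K_8 minor). -/

import Mathlib

/-- A connected graph `G` with chromatic number `k` is *double-critical* if for every
edge `uv` of `G`, deleting both `u` and `v` yields a graph that is `(k-2)`-colourable. -/
def SimpleGraph.DoubleCritical {V : Type*} (G : SimpleGraph V) (k : ℕ) : Prop :=
  G.Connected ∧ G.chromaticNumber = k ∧
    ∀ u v : V, G.Adj u v →
      (G.induce ({u, v}ᶜ : Set V)).chromaticNumber ≤ (k - 2 : ℕ)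

/-- `G.HasMinor H` means `H` is a minor of `G`, witnessed by nonempty pairwise disjoint
branch sets inducing connected subgraphs, with edges of `G` between branch sets
corresponding to adjacent vertices of `H`. -/
def SimpleGraph.HasMinor {V W : Type*} (G : SimpleGraph V) (H : SimpleGraph W) : Prop :=
  ∃ B : W → Set V,
    (∀ w, (B w).Nonempty) ∧
    (Pairwise fun w₁ w₂ => Disjoint (B w₁) (B w₂)) ∧
    (∀ w, (G.induce (B w)).Connected) ∧
    (∀ w₁ w₂, H.Adj w₁ w₂ → ∃ v₁ ∈ B w₁, ∃ v₂ ∈ B w₂, G.Adj v₁ v₂)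

set_option linter.unusedSectionVars false

section Helpers


open SimpleGraph

variable {V : Type*}

lemma connected_induce_singleton (G : SimpleGraph V) (a : V) :
    (G.induce ({a} : Set V)).Connected := by
  rw [SimpleGraph.connected_iff]
  constructor
  · intro u v
    have : u = v := Subtype.ext (by
      have hu := u.2; have hv := v.2
      simp only [Set.mem_singleton_iff] at hu hv
      rw [hu, hv])
    exact this ▸ SimpleGraph.Reachable.refl _
  · exact ⟨⟨a, rfl⟩⟩

lemma connected_induce_pair (G : SimpleGraph V) {a b : V} (hab : G.Adj a b) :
    (G.induce ({a, b} : Set V)).Connected := by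
  rw [SimpleGraph.connected_iff]
  constructor
  · intro u v
    have key : ∀ w : ↥({a, b} : Set V), w = ⟨a, by simp⟩ ∨ w = ⟨b, by simp⟩ := by
      intro w
      rcases w.2 with h | h
      · exact Or.inl (Subtype.ext h)
      · exact Or.inr (Subtype.ext h)
    have hadj : (G.induce ({a, b} : Set V)).Adj ⟨a, by simp⟩ ⟨b, by simp⟩ := by
      simp [SimpleGraph.comap_adj, hab]
    rcases key u with hu | hu <;> rcases key v with hv | hv <;> subst hu <;> subst hv
    · exact SimpleGraph.Reachable.refl _
    · exact hadj.reachable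
    · exact hadj.symm.reachable
    · exact SimpleGraph.Reachable.refl _
  · exact ⟨⟨a, by simp⟩⟩


lemma hasMinor_of_parts (G : SimpleGraph V) (x : V) (parts : List (Set V))
    (hlen : parts.length = 7)
    (hne : ∀ P ∈ parts, P.Nonempty)
    (hsub : ∀ P ∈ parts, P ⊆ G.neighborSet x)
    (hconn : ∀ P ∈ parts, (G.induce P).Connected)
    (hpw : parts.Pairwise (fun P Q => Disjoint P Q ∧ ∃ a ∈ P, ∃ b ∈ Q, G.Adj a b)) :
    G.HasMinor (⊤ : SimpleGraph (Fin 8)) := by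
  set B : Fin 8 → Set V := fun i =>
    if h : (i : ℕ) = 0 then {x} else parts.get ⟨(i : ℕ) - 1, by omega⟩ with hB
  have hget : ∀ (i : Fin 8) (h : (i:ℕ) ≠ 0), B i = parts.get ⟨(i:ℕ) - 1, by omega⟩ := by
    intro i h; exact dif_neg h
  have hmem : ∀ (i : Fin 8) (h : (i:ℕ) ≠ 0), B i ∈ parts := by
    intro i h; rw [hget i h]; exact List.get_mem _ _
  have hpw' : ∀ (i j : Fin 8), (i:ℕ) ≠ 0 → (j:ℕ) ≠ 0 → i ≠ j →
      Disjoint (B i) (B j) ∧ ∃ a ∈ B i, ∃ b ∈ B j, G.Adj a b := by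
    intro i j hi hj hij
    rw [hget i hi, hget j hj]
    rcases lt_trichotomy ((i:ℕ) - 1) ((j:ℕ) - 1) with h | h | h
    · exact List.pairwise_iff_get.mp hpw ⟨(i:ℕ)-1, by omega⟩ ⟨(j:ℕ)-1, by omega⟩ h
    · exfalso; apply hij; apply Fin.ext; omega
    · obtain ⟨hd, a, ha, b, hb, hab⟩ :=
        List.pairwise_iff_get.mp hpw ⟨(j:ℕ)-1, by omega⟩ ⟨(i:ℕ)-1, by omega⟩ h
      exact ⟨hd.symm, b, hb, a, ha, hab.symm⟩
  have hxnot : ∀ (j : Fin 8) (h : (j:ℕ) ≠ 0), x ∉ B j := by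
    intro j h hx
    exact G.irrefl (hsub _ (hmem j h) hx)
  refine ⟨B, ?_, ?_, ?_, ?_⟩
  · intro i
    by_cases h : (i:ℕ) = 0
    · rw [show B i = {x} from dif_pos h]; simp
    · exact hne _ (hmem i h)
  · intro i j hij
    by_cases hi : (i:ℕ) = 0 <;> by_cases hj : (j:ℕ) = 0
    · exfalso; apply hij; apply Fin.ext; omega
    · have : B i = {x} := dif_pos hi
      rw [this, Set.disjoint_singleton_left]
      exact hxnot j hj
    · have : B j = {x} := dif_pos hj
      rw [this, Set.disjoint_singleton_right]
      exact hxnot i hi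
    · exact (hpw' i j hi hj hij).1
  · intro i
    by_cases h : (i:ℕ) = 0
    · have : B i = {x} := dif_pos h
      rw [this]; exact connected_induce_singleton G x
    · exact hconn _ (hmem i h)
  · intro i j hadj
    have hij : i ≠ j := (SimpleGraph.top_adj i j).mp hadj
    by_cases hi : (i:ℕ) = 0 <;> by_cases hj : (j:ℕ) = 0
    · exfalso; apply hij; apply Fin.ext; omega
    · obtain ⟨b, hb⟩ := hne _ (hmem j hj)
      have hBi : B i = {x} := dif_pos hi
      refine ⟨x, by simp [hBi], b, hb, ?_⟩
      · have := hsub _ (hmem j hj) hb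
        rwa [SimpleGraph.mem_neighborSet] at this
    · obtain ⟨a, ha⟩ := hne _ (hmem i hi)
      have hBj : B j = {x} := dif_pos hj
      refine ⟨a, ha, x, by simp [hBj], ?_⟩
      have := hsub _ (hmem i hi) ha
      rw [SimpleGraph.mem_neighborSet] at this
      exact this.symm
    · obtain ⟨_, a, ha, b, hb, hab⟩ := hpw' i j hi hj hij
      exact ⟨a, ha, b, hb, hab⟩


end Helpers

section Pairs


variable {V : Type*} [DecidableEq V]

lemma no_three_partners {K : V → V → Prop} [DecidableRel K] {R : Finset V} {v : V}
    (h : (R.filter (fun u => K v u)).card ≤ 2) {a b c : V}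
    (ha : a ∈ R) (hb : b ∈ R) (hc : c ∈ R)
    (hab : a ≠ b) (hac : a ≠ c) (hbc : b ≠ c)
    (hKa : K v a) (hKb : K v b) (hKc : K v c) : False := by
  have hsub : ({a, b, c} : Finset V) ⊆ R.filter (fun u => K v u) := by
    intro y hy
    simp only [Finset.mem_insert, Finset.mem_singleton] at hy
    rcases hy with rfl | rfl | rfl <;> simp [Finset.mem_filter, ha, hb, hc, hKa, hKb, hKc]
  have h3 : ({a, b, c} : Finset V).card = 3 := by
    rw [Finset.card_insert_of_notMem (by simp [hab, hac]),
        Finset.card_insert_of_notMem (by simp [hbc]), Finset.card_singleton]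
  have := Finset.card_le_card hsub
  omega

/-- From any 3 distinct vertices in a triangle-free set, extract a non-edge. -/
lemma nonedge_of_three {K : V → V → Prop} {R : Finset V}
    (hTF : ¬ ∃ t₁ ∈ R, ∃ t₂ ∈ R, ∃ t₃ ∈ R,
      t₁ ≠ t₂ ∧ t₁ ≠ t₃ ∧ t₂ ≠ t₃ ∧ K t₁ t₂ ∧ K t₁ t₃ ∧ K t₂ t₃)
    {a b c : V} (ha : a ∈ R) (hb : b ∈ R) (hc : c ∈ R)
    (hab : a ≠ b) (hac : a ≠ c) (hbc : b ≠ c) :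
    ¬K a b ∨ ¬K a c ∨ ¬K b c := by
  by_contra h
  push_neg at h
  exact hTF ⟨a, ha, b, hb, c, hc, hab, hac, hbc, h.1, h.2.1, h.2.2⟩

/-- Get three distinct elements of a finset of card ≥ 3. -/
lemma three_of_card {R : Finset V} (h : 3 ≤ R.card) :
    ∃ a ∈ R, ∃ b ∈ R, ∃ c ∈ R, a ≠ b ∧ a ≠ c ∧ b ≠ c := by
  obtain ⟨T, hTR, hT3⟩ := Finset.exists_subset_card_eq h
  obtain ⟨a, b, c, hab, hac, hbc, rfl⟩ := Finset.card_eq_three.mp hT3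
  exact ⟨a, hTR (by simp), b, hTR (by simp), c, hTR (by simp), hab, hac, hbc⟩

theorem exists_pairs {K : V → V → Prop} [DecidableRel K]
    (hsym : ∀ {u v}, K u v → K v u)
    (p : ℕ) (hp : p ≤ 3) (R : Finset V) (hcard : R.card = p + 3)
    (hdeg : ∀ v ∈ R, (R.filter (fun u => K v u)).card ≤ 2) :
    ∃ l : List (V × V), l.length = p ∧
      (∀ pr ∈ l, pr.1 ∈ R ∧ pr.2 ∈ R ∧ pr.1 ≠ pr.2 ∧ ¬K pr.1 pr.2) ∧
      (l.flatMap fun pr => [pr.1, pr.2]).Nodup := by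
  rcases Nat.eq_zero_or_pos p with rfl | hppos
  · exact ⟨[], rfl, by simp, by simp⟩
  by_cases htri : ∃ t₁ ∈ R, ∃ t₂ ∈ R, ∃ t₃ ∈ R,
      t₁ ≠ t₂ ∧ t₁ ≠ t₃ ∧ t₂ ≠ t₃ ∧ K t₁ t₂ ∧ K t₁ t₃ ∧ K t₂ t₃
  · obtain ⟨t₁, ht₁, t₂, ht₂, t₃, ht₃, h12, h13, h23, K12, K13, K23⟩ := htri
    set T : Finset V := {t₁, t₂, t₃} with hT
    have hTsub : T ⊆ R := by
      intro y hy; simp only [hT, Finset.mem_insert, Finset.mem_singleton] at hy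
      rcases hy with rfl | rfl | rfl <;> assumption
    have hTcard : T.card = 3 := by
      rw [hT, Finset.card_insert_of_notMem (by simp [h12, h13]),
          Finset.card_insert_of_notMem (by simp [h23]), Finset.card_singleton]
    set W := R \ T with hW
    have hWcard : W.card = p := by
      rw [hW, Finset.card_sdiff_of_subset hTsub, hTcard, hcard]; omega
    have hWR : W ⊆ R := Finset.sdiff_subset
    have hWt : ∀ w ∈ W, w ≠ t₁ ∧ w ≠ t₂ ∧ w ≠ t₃ := by
      intro w hw
      rw [hW, Finset.mem_sdiff, hT] at hw
      have := hw.2; simp only [Finset.mem_insert, Finset.mem_singleton] at this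
      push_neg at this; exact this
    have hfull1 : ∀ w ∈ W, ¬K t₁ w := by
      intro w hw hKw
      obtain ⟨h1, h2, h3⟩ := hWt w hw
      exact no_three_partners (hdeg t₁ ht₁) ht₂ ht₃ (hWR hw) h23 h2.symm h3.symm K12 K13 hKw
    have hfull2 : ∀ w ∈ W, ¬K t₂ w := by
      intro w hw hKw
      obtain ⟨h1, h2, h3⟩ := hWt w hw
      exact no_three_partners (hdeg t₂ ht₂) ht₁ ht₃ (hWR hw) h13 h1.symm h3.symm
        (hsym K12) K23 hKw
    have hfull3 : ∀ w ∈ W, ¬K t₃ w := by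
      intro w hw hKw
      obtain ⟨h1, h2, h3⟩ := hWt w hw
      exact no_three_partners (hdeg t₃ ht₃) ht₁ ht₂ (hWR hw) h12 h1.symm h2.symm
        (hsym K13) (hsym K23) hKw
    interval_cases p
    · -- p = 1
      obtain ⟨w, hwW⟩ := Finset.card_eq_one.mp hWcard
      have hw : w ∈ W := by rw [hwW]; simp
      refine ⟨[(t₁, w)], rfl, ?_, by simp [(hWt w hw).1.symm]⟩
      rintro pr hpr
      simp only [List.mem_singleton] at hpr
      subst hpr
      exact ⟨ht₁, hWR hw, (hWt w hw).1.symm, hfull1 w hw⟩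
    · -- p = 2
      obtain ⟨w₁, w₂, hw12, hwW⟩ := Finset.card_eq_two.mp hWcard
      have hw₁ : w₁ ∈ W := by rw [hwW]; simp
      have hw₂ : w₂ ∈ W := by rw [hwW]; simp
      refine ⟨[(t₁, w₁), (t₂, w₂)], rfl, ?_, ?_⟩
      · rintro pr hpr
        simp only [List.mem_cons, List.mem_singleton] at hpr
        rcases hpr with rfl | rfl | h
        · exact ⟨ht₁, hWR hw₁, (hWt w₁ hw₁).1.symm, hfull1 w₁ hw₁⟩
        · exact ⟨ht₂, hWR hw₂, (hWt w₂ hw₂).2.1.symm, hfull2 w₂ hw₂⟩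
        · simp at h
      · obtain ⟨e1, e2, e3⟩ := hWt w₁ hw₁
        obtain ⟨f1, f2, f3⟩ := hWt w₂ hw₂
        simp [e1.symm, e2.symm, f1.symm, f2.symm, h12, hw12, e1, f2,
          (show t₁ ≠ w₂ from f1.symm), (show w₁ ≠ t₂ from e2)]
    · -- p = 3
      obtain ⟨w₁, w₂, w₃, hw12, hw13, hw23, hwW⟩ := Finset.card_eq_three.mp hWcard
      have hw₁ : w₁ ∈ W := by rw [hwW]; simp
      have hw₂ : w₂ ∈ W := by rw [hwW]; simp
      have hw₃ : w₃ ∈ W := by rw [hwW]; simp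
      refine ⟨[(t₁, w₁), (t₂, w₂), (t₃, w₃)], rfl, ?_, ?_⟩
      · rintro pr hpr
        simp only [List.mem_cons, List.mem_singleton] at hpr
        rcases hpr with rfl | rfl | rfl | h
        · exact ⟨ht₁, hWR hw₁, (hWt w₁ hw₁).1.symm, hfull1 w₁ hw₁⟩
        · exact ⟨ht₂, hWR hw₂, (hWt w₂ hw₂).2.1.symm, hfull2 w₂ hw₂⟩
        · exact ⟨ht₃, hWR hw₃, (hWt w₃ hw₃).2.2.symm, hfull3 w₃ hw₃⟩
        · simp at h
      · obtain ⟨e1, e2, e3⟩ := hWt w₁ hw₁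
        obtain ⟨f1, f2, f3⟩ := hWt w₂ hw₂
        obtain ⟨g1, g2, g3⟩ := hWt w₃ hw₃
        simp [e1.symm, e2.symm, e3.symm, f1.symm, f2.symm, f3.symm, g1.symm, g2.symm, g3.symm,
          h12, h13, h23, hw12, hw13, hw23, e1, e2, e3, f1, f2, f3, g1, g2, g3]
  · -- triangle-free case
    have hne3 : ∀ {a b c : V}, a ∈ R → b ∈ R → c ∈ R → a ≠ b → a ≠ c → b ≠ c →
        ¬K a b ∨ ¬K a c ∨ ¬K b c :=
      fun ha hb hc hab hac hbc => nonedge_of_three htri ha hb hc hab hac hbc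
    interval_cases p
    · -- p = 1 : card 4, find one non-edge
      obtain ⟨a, ha, b, hb, c, hc, hab, hac, hbc⟩ := three_of_card (by omega : 3 ≤ R.card)
      rcases hne3 ha hb hc hab hac hbc with h | h | h
      · refine ⟨[(a, b)], rfl, ?_, by simp [hab]⟩
        rintro pr hpr
        simp only [List.mem_singleton] at hpr
        subst hpr
        exact ⟨ha, hb, hab, h⟩
      · refine ⟨[(a, c)], rfl, ?_, by simp [hac]⟩
        rintro pr hpr
        simp only [List.mem_singleton] at hpr
        subst hpr
        exact ⟨ha, hc, hac, h⟩
      · refine ⟨[(b, c)], rfl, ?_, by simp [hbc]⟩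
        rintro pr hpr
        simp only [List.mem_singleton] at hpr
        subst hpr
        exact ⟨hb, hc, hbc, h⟩
    · -- p = 2 : card 5
      obtain ⟨a, ha, b, hb, c, hc, hab, hac, hbc⟩ := three_of_card (by omega : 3 ≤ R.card)
      -- get a non-edge (u,v) among a b c
      obtain ⟨u, v, hu, hv, huv, hKuv⟩ :
          ∃ u v, u ∈ R ∧ v ∈ R ∧ u ≠ v ∧ ¬K u v := by
        rcases hne3 ha hb hc hab hac hbc with h | h | h
        · exact ⟨a, b, ha, hb, hab, h⟩
        · exact ⟨a, c, ha, hc, hac, h⟩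
        · exact ⟨b, c, hb, hc, hbc, h⟩
      set R' := (R.erase u).erase v with hR'
      have hR'sub : R' ⊆ R := by
        intro y hy; exact Finset.mem_of_mem_erase (Finset.mem_of_mem_erase hy)
      have hR'card : R'.card = 3 := by
        rw [hR', Finset.card_erase_of_mem (Finset.mem_erase.mpr ⟨huv.symm, hv⟩),
            Finset.card_erase_of_mem hu, hcard]
      obtain ⟨d, e, f, hde, hdf, hef, hR'eq⟩ := Finset.card_eq_three.mp hR'card
      have hd : d ∈ R' := by rw [hR'eq]; simp
      have he : e ∈ R' := by rw [hR'eq]; simp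
      have hf : f ∈ R' := by rw [hR'eq]; simp
      have hnuv : ∀ y ∈ R', y ≠ u ∧ y ≠ v := by
        intro y hy
        rw [hR', Finset.mem_erase] at hy
        exact ⟨Finset.ne_of_mem_erase hy.2, hy.1⟩
      obtain ⟨w₁, w₂, hw1, hw2, hw12, hKw⟩ :
          ∃ w₁ w₂, w₁ ∈ R' ∧ w₂ ∈ R' ∧ w₁ ≠ w₂ ∧ ¬K w₁ w₂ := by
        rcases hne3 (hR'sub hd) (hR'sub he) (hR'sub hf) hde hdf hef with h | h | h
        · exact ⟨d, e, hd, he, hde, h⟩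
        · exact ⟨d, f, hd, hf, hdf, h⟩
        · exact ⟨e, f, he, hf, hef, h⟩
      refine ⟨[(u, v), (w₁, w₂)], rfl, ?_, ?_⟩
      · rintro pr hpr
        simp only [List.mem_cons, List.mem_singleton] at hpr
        rcases hpr with rfl | rfl | h
        · exact ⟨hu, hv, huv, hKuv⟩
        · exact ⟨hR'sub hw1, hR'sub hw2, hw12, hKw⟩
        · simp at h
      · obtain ⟨p1, p2⟩ := hnuv w₁ hw1
        obtain ⟨q1, q2⟩ := hnuv w₂ hw2
        simp [huv, hw12, p1.symm, p2.symm, q1.symm, q2.symm, p1, q1, p2, q2]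
    · -- p = 3 : card 6
      obtain ⟨a, ha, b, hb, c0, hc0, hab, hac0, hbc0⟩ := three_of_card (by omega : 3 ≤ R.card)
      obtain ⟨u, v, hu, hv, huv, hKuv⟩ :
          ∃ u v, u ∈ R ∧ v ∈ R ∧ u ≠ v ∧ ¬K u v := by
        rcases hne3 ha hb hc0 hab hac0 hbc0 with h | h | h
        · exact ⟨a, b, ha, hb, hab, h⟩
        · exact ⟨a, c0, ha, hc0, hac0, h⟩
        · exact ⟨b, c0, hb, hc0, hbc0, h⟩
      set R' := (R.erase u).erase v with hR'
      have hR'sub : R' ⊆ R := by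
        intro y hy; exact Finset.mem_of_mem_erase (Finset.mem_of_mem_erase hy)
      have hR'card : R'.card = 4 := by
        rw [hR', Finset.card_erase_of_mem (Finset.mem_erase.mpr ⟨huv.symm, hv⟩),
            Finset.card_erase_of_mem hu, hcard]
      have hnuv : ∀ y ∈ R', y ≠ u ∧ y ≠ v := by
        intro y hy
        rw [hR', Finset.mem_erase] at hy
        exact ⟨Finset.ne_of_mem_erase hy.2, hy.1⟩
      -- extract 4 elements c d e f of R'
      obtain ⟨c, hcR'⟩ : ∃ c, c ∈ R' := Finset.card_pos.mp (by omega)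
      set R'' := R'.erase c with hR''
      have hR''card : R''.card = 3 := by
        rw [hR'', Finset.card_erase_of_mem hcR', hR'card]
      obtain ⟨d, e, f, hde, hdf, hef, hR''eq⟩ := Finset.card_eq_three.mp hR''card
      have hdR'' : d ∈ R'' := by rw [hR''eq]; simp
      have heR'' : e ∈ R'' := by rw [hR''eq]; simp
      have hfR'' : f ∈ R'' := by rw [hR''eq]; simp
      have hdR' : d ∈ R' := Finset.mem_of_mem_erase hdR''
      have heR' : e ∈ R' := Finset.mem_of_mem_erase heR''
      have hfR' : f ∈ R' := Finset.mem_of_mem_erase hfR''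
      have hcd : c ≠ d := (Finset.ne_of_mem_erase hdR'').symm
      have hce : c ≠ e := (Finset.ne_of_mem_erase heR'').symm
      have hcf : c ≠ f := (Finset.ne_of_mem_erase hfR'').symm
      have hcR : c ∈ R := hR'sub hcR'
      have hdR : d ∈ R := hR'sub hdR'
      have heR : e ∈ R := hR'sub heR'
      have hfR : f ∈ R := hR'sub hfR'
      -- degree facts
      have Dc : ¬(K c d ∧ K c e ∧ K c f) := by
        rintro ⟨h1, h2, h3⟩
        exact no_three_partners (hdeg c hcR) hdR heR hfR hde hdf hef h1 h2 h3
      have Dd : ¬(K d c ∧ K d e ∧ K d f) := by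
        rintro ⟨h1, h2, h3⟩
        exact no_three_partners (hdeg d hdR) hcR heR hfR hce hcf hef h1 h2 h3
      have De : ¬(K e c ∧ K e d ∧ K e f) := by
        rintro ⟨h1, h2, h3⟩
        exact no_three_partners (hdeg e heR) hcR hdR hfR hcd hcf hdf h1 h2 h3
      have Df : ¬(K f c ∧ K f d ∧ K f e) := by
        rintro ⟨h1, h2, h3⟩
        exact no_three_partners (hdeg f hfR) hcR hdR heR hcd hce hde h1 h2 h3
      -- triangle-freeness facts
      have T1 := fun h1 h2 h3 => htri ⟨c, hcR, d, hdR, e, heR, hcd, hce, hde, h1, h2, h3⟩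
      have T2 := fun h1 h2 h3 => htri ⟨c, hcR, d, hdR, f, hfR, hcd, hcf, hdf, h1, h2, h3⟩
      have T3 := fun h1 h2 h3 => htri ⟨c, hcR, e, heR, f, hfR, hce, hcf, hef, h1, h2, h3⟩
      have T4 := fun h1 h2 h3 => htri ⟨d, hdR, e, heR, f, hfR, hde, hdf, hef, h1, h2, h3⟩
      -- the key propositional fact
      have key : (¬K c d ∧ ¬K e f) ∨ (¬K c e ∧ ¬K d f) ∨ (¬K c f ∧ ¬K d e) := by
        by_contra hcon
        push_neg at hcon
        obtain ⟨h1, h2, h3⟩ := hcon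
        have h1' : K c d ∨ K e f := or_iff_not_imp_left.mpr h1
        have h2' : K c e ∨ K d f := or_iff_not_imp_left.mpr h2
        have h3' : K c f ∨ K d e := or_iff_not_imp_left.mpr h3
        rcases h1' with kcd | kef <;> rcases h2' with kce | kdf <;> rcases h3' with kcf | kde
        · exact Dc ⟨kcd, kce, kcf⟩
        · exact T1 kcd kce kde
        · exact T2 kcd kcf kdf
        · exact Dd ⟨hsym kcd, kde, kdf⟩
        · exact T3 kce kcf kef
        · exact De ⟨hsym kce, hsym kde, kef⟩
        · exact Df ⟨hsym kcf, hsym kdf, hsym kef⟩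
        · exact T4 kde kdf kef
      obtain ⟨pr₁, pr₂, hprs⟩ :
          ∃ pr₁ pr₂ : V × V,
            (pr₁.1 ∈ R' ∧ pr₁.2 ∈ R' ∧ pr₁.1 ≠ pr₁.2 ∧ ¬K pr₁.1 pr₁.2) ∧
            (pr₂.1 ∈ R' ∧ pr₂.2 ∈ R' ∧ pr₂.1 ≠ pr₂.2 ∧ ¬K pr₂.1 pr₂.2) ∧
            pr₁.1 ≠ pr₂.1 ∧ pr₁.1 ≠ pr₂.2 ∧ pr₁.2 ≠ pr₂.1 ∧ pr₁.2 ≠ pr₂.2 := by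
        rcases key with ⟨h1, h2⟩ | ⟨h1, h2⟩ | ⟨h1, h2⟩
        · exact ⟨(c, d), (e, f), ⟨hcR', hdR', hcd, h1⟩, ⟨heR', hfR', hef, h2⟩,
            hce, hcf, hde, hdf⟩
        · exact ⟨(c, e), (d, f), ⟨hcR', heR', hce, h1⟩, ⟨hdR', hfR', hdf, h2⟩,
            hcd, hcf, (fun h => hde h.symm), hef⟩
        · exact ⟨(c, f), (d, e), ⟨hcR', hfR', hcf, h1⟩, ⟨hdR', heR', hde, h2⟩,
            hcd, hce, (fun h => hdf h.symm), (fun h => hef h.symm)⟩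
      obtain ⟨⟨m1, m2, m3, m4⟩, ⟨n1, n2, n3, n4⟩, d1, d2, d3, d4⟩ := hprs
      refine ⟨[(u, v), pr₁, pr₂], rfl, ?_, ?_⟩
      · rintro pr hpr
        simp only [List.mem_cons, List.mem_singleton] at hpr
        rcases hpr with rfl | rfl | rfl | h
        · exact ⟨hu, hv, huv, hKuv⟩
        · exact ⟨hR'sub m1, hR'sub m2, m3, m4⟩
        · exact ⟨hR'sub n1, hR'sub n2, n3, n4⟩
        · simp at h
      · obtain ⟨a1, a2⟩ := hnuv _ m1
        obtain ⟨b1, b2⟩ := hnuv _ m2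
        obtain ⟨c1, c2⟩ := hnuv _ n1
        obtain ⟨e1, e2⟩ := hnuv _ n2
        simp [huv, a1.symm, a2.symm, b1.symm, b2.symm, c1.symm, c2.symm, e1.symm, e2.symm,
          m3, n3, d1, d2, d3, d4, a1, b1, c1, e1, a2, b2, c2, e2]

end Pairs

set_option maxHeartbeats 1000000

/-- If `G` is a double-critical 8-chromatic graph with minimum degree 10 containing a
vertex `x` of degree 10 such that the complement of the neighbourhood graph of `x` has
maximum degree at most 2, then `G` has a `K₈` minor. -/
theorem double_critical_eight_chromatic_neighborhood_compl_maxDegree_le_two_hasMinor_K8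
    {V : Type*} [Fintype V] [DecidableEq V] (G : SimpleGraph V) [DecidableRel G.Adj]
    (hG : G.DoubleCritical 8) (hδ : G.minDegree = 10)
    (x : V) (hx : G.degree x = 10)
    (hΔ : ((G.induce (G.neighborSet x))ᶜ).maxDegree ≤ 2) :
    G.HasMinor (⊤ : SimpleGraph (Fin 8)) := by
  classical
  set A : Finset V := G.neighborFinset x with hAdef
  have hA10 : A.card = 10 := hx
  have hmemA : ∀ {v}, v ∈ A → G.Adj x v := by
    intro v hv; rwa [hAdef, SimpleGraph.mem_neighborFinset] at hv
  have hxA : x ∉ A := by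
    intro h; exact G.irrefl (hmemA h)
  -- degree bound inside the neighbourhood
  have hdeg : ∀ v ∈ A, (A.filter fun u => v ≠ u ∧ ¬G.Adj v u).card ≤ 2 := by
    intro v hv
    have hv' : v ∈ G.neighborSet x := by
      rwa [hAdef, SimpleGraph.mem_neighborFinset] at hv
    set C := (G.induce (G.neighborSet x))ᶜ with hC
    have hdegC : (C.neighborFinset ⟨v, hv'⟩).card ≤ 2 :=
      le_trans (C.degree_le_maxDegree ⟨v, hv'⟩) hΔ
    refine le_trans (Finset.card_le_card_of_injOn
      (fun u => if h : u ∈ G.neighborSet x then (⟨u, h⟩ : ↥(G.neighborSet x)) else ⟨v, hv'⟩)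
      ?_ ?_) hdegC
    · intro u hu
      rw [Finset.mem_coe, Finset.mem_filter] at hu
      obtain ⟨huA, hvu, hnadj⟩ := hu
      have hu' : u ∈ G.neighborSet x := (G.mem_neighborSet x u).mpr (hmemA huA)
      dsimp only
      rw [dif_pos hu', Finset.mem_coe, SimpleGraph.mem_neighborFinset, hC, SimpleGraph.compl_adj]
      constructor
      · intro h; exact hvu (congrArg Subtype.val h)
      · simpa [SimpleGraph.comap_adj] using hnadj
    · intro u₁ h₁ u₂ h₂ heq
      simp only [Finset.coe_filter, Set.mem_setOf_eq] at h₁ h₂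
      have hu₁ : u₁ ∈ G.neighborSet x := (G.mem_neighborSet x u₁).mpr (hmemA h₁.1)
      have hu₂ : u₂ ∈ G.neighborSet x := (G.mem_neighborSet x u₂).mpr (hmemA h₂.1)
      dsimp only at heq
      rw [dif_pos hu₁, dif_pos hu₂] at heq
      exact congrArg Subtype.val heq
  -- maximal clique S inside A
  obtain ⟨S, hSmem, hSmax⟩ := Finset.exists_max_image
    ((A.powerset.filter (fun s => ∀ u ∈ s, ∀ w ∈ s, u ≠ w → G.Adj u w))) Finset.card
    ⟨∅, by simp⟩
  rw [Finset.mem_filter, Finset.mem_powerset] at hSmem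
  obtain ⟨hSA, hSclique⟩ := hSmem
  have hmaximal : ∀ a ∈ A, a ∉ S → ∃ s ∈ S, ¬G.Adj a s := by
    intro a haA haS
    by_contra hcon
    push_neg at hcon
    have hins : insert a S ∈ A.powerset.filter
        (fun s => ∀ u ∈ s, ∀ w ∈ s, u ≠ w → G.Adj u w) := by
      rw [Finset.mem_filter, Finset.mem_powerset]
      refine ⟨Finset.insert_subset haA hSA, ?_⟩
      intro u hu w hw huw
      rw [Finset.mem_insert] at hu hw
      rcases hu with rfl | hu <;> rcases hw with rfl | hw
      · exact absurd rfl huw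
      · exact hcon w hw
      · exact (hcon u hu).symm
      · exact hSclique u hu w hw huw
    have := hSmax _ hins
    rw [Finset.card_insert_of_notMem haS] at this
    omega
  -- |S| ≥ 4
  have hS4 : 4 ≤ S.card := by
    have hcover : A ⊆ S ∪ S.biUnion (fun s => A.filter (fun u => s ≠ u ∧ ¬G.Adj s u)) := by
      intro a haA
      rw [Finset.mem_union]
      by_cases haS : a ∈ S
      · exact Or.inl haS
      · obtain ⟨s, hsS, hnadj⟩ := hmaximal a haA haS
        refine Or.inr (Finset.mem_biUnion.mpr ⟨s, hsS, ?_⟩)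
        rw [Finset.mem_filter]
        exact ⟨haA, fun h => haS (h ▸ hsS), fun h => hnadj h.symm⟩
    have h1 : A.card ≤ S.card +
        (S.biUnion (fun s => A.filter (fun u => s ≠ u ∧ ¬G.Adj s u))).card :=
      le_trans (Finset.card_le_card hcover) (Finset.card_union_le _ _)
    have h2 : (S.biUnion (fun s => A.filter (fun u => s ≠ u ∧ ¬G.Adj s u))).card
        ≤ S.card * 2 := by
      refine le_trans (Finset.card_biUnion_le) ?_
      calc ∑ s ∈ S, (A.filter (fun u => s ≠ u ∧ ¬G.Adj s u)).card
          ≤ S.card • 2 := Finset.sum_le_card_nsmul _ _ 2 (fun s hs => hdeg s (hSA hs))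
        _ = S.card * 2 := by simp [smul_eq_mul]
    omega
  -- abbreviation for the adjacency claim we need about parts
  set PR : Set V → Set V → Prop :=
    fun P Q => Disjoint P Q ∧ ∃ a ∈ P, ∃ b ∈ Q, G.Adj a b with hPR
  -- single-single lemma
  have hsingle : ∀ (T : Finset V), T ⊆ S → (T.toList.map (fun s => ({s} : Set V))).Pairwise PR := by
    intro T hTS
    rw [List.pairwise_map]
    refine List.Pairwise.imp_of_mem ?_ T.nodup_toList
    intro a b ha hb hne
    have haS : a ∈ S := hTS (Finset.mem_toList.mp ha)
    have hbS : b ∈ S := hTS (Finset.mem_toList.mp hb)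
    refine ⟨by simp [Set.disjoint_singleton_left, hne], a, rfl, b, rfl, ?_⟩
    exact hSclique a haS b hbS hne
  by_cases h7 : 7 ≤ S.card
  · obtain ⟨S', hS'S, hS'7⟩ := Finset.exists_subset_card_eq h7
    refine hasMinor_of_parts G x (S'.toList.map (fun s => ({s} : Set V))) ?_ ?_ ?_ ?_ ?_
    · simp [hS'7]
    · intro P hP
      simp only [List.mem_map] at hP
      obtain ⟨s, _, rfl⟩ := hP
      exact ⟨s, rfl⟩
    · intro P hP
      simp only [List.mem_map] at hP
      obtain ⟨s, hs, rfl⟩ := hP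
      intro y hy
      rw [Set.mem_singleton_iff] at hy
      subst hy
      exact (G.mem_neighborSet x y).mpr (hmemA (hSA (hS'S (Finset.mem_toList.mp hs))))
    · intro P hP
      simp only [List.mem_map] at hP
      obtain ⟨s, _, rfl⟩ := hP
      exact connected_induce_singleton G s
    · exact hsingle S' hS'S
  · -- S.card ∈ {4,5,6}
    set p : ℕ := 7 - S.card with hpdef
    have hp3 : p ≤ 3 := by omega
    set R : Finset V := A \ S with hRdef
    have hRcard : R.card = p + 3 := by
      rw [hRdef, Finset.card_sdiff_of_subset hSA]; omega
    have hRA : R ⊆ A := Finset.sdiff_subset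
    have hRS : ∀ {v}, v ∈ R → v ∉ S := by
      intro v hv; exact (Finset.mem_sdiff.mp hv).2
    set K : V → V → Prop :=
      fun u v => u ≠ v ∧ (¬G.Adj u v ∨ ∃ s ∈ S, ¬G.Adj s u ∧ ¬G.Adj s v) with hKdef
    haveI : DecidableRel K := fun u v => Classical.dec _
    have hKsym : ∀ {u v}, K u v → K v u := by
      rintro u v ⟨h1, h2⟩
      refine ⟨h1.symm, h2.imp (fun h hadj => h hadj.symm) ?_⟩
      rintro ⟨s, hs, hsu, hsv⟩; exact ⟨s, hs, hsv, hsu⟩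
    have hKdeg : ∀ u ∈ R, (R.filter (fun v => K u v)).card ≤ 2 := by
      intro u huR
      have huA : u ∈ A := hRA huR
      refine le_trans (Finset.card_le_card_of_injOn
        (fun v => if hb : ∃ s ∈ S, ¬G.Adj s u ∧ ¬G.Adj s v ∧ G.Adj u v then hb.choose else v)
        ?_ ?_) (hdeg u huA)
      · intro v hv
        rw [Finset.mem_coe, Finset.mem_filter] at hv
        obtain ⟨hvR, hKuv⟩ := hv
        obtain ⟨hne, hcase⟩ := hKuv
        dsimp only
        split
        · next hb =>
          obtain ⟨hsS, hsu, hsv, hadj⟩ := hb.choose_spec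
          rw [Finset.mem_coe, Finset.mem_filter]
          refine ⟨hSA hsS, ?_, fun h => hsu h.symm⟩
          intro h; exact hRS huR (h ▸ hsS)
        · next hb =>
          rw [Finset.mem_coe, Finset.mem_filter]
          refine ⟨hRA hvR, hne, ?_⟩
          rcases hcase with h | ⟨s, hs, hsu, hsv⟩
          · exact h
          · intro hadj; exact hb ⟨s, hs, hsu, hsv, hadj⟩
      · intro v₁ h₁ v₂ h₂ heq
        simp only [Finset.coe_filter, Set.mem_setOf_eq] at h₁ h₂
        obtain ⟨hv₁R, hK₁⟩ := h₁
        obtain ⟨hv₂R, hK₂⟩ := h₂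
        dsimp only at heq
        by_contra hne12
        split at heq <;> split at heq
        · next hb₁ hb₂ =>
          obtain ⟨hs₁S, hs₁u, hs₁v, _⟩ := hb₁.choose_spec
          obtain ⟨hs₂S, hs₂u, hs₂v, _⟩ := hb₂.choose_spec
          rw [heq] at hs₁S hs₁u hs₁v
          refine no_three_partners (K := fun a b => a ≠ b ∧ ¬G.Adj a b)
            (hdeg hb₂.choose (hSA hs₂S)) huA (hRA hv₁R) (hRA hv₂R)
            hK₁.1 hK₂.1 hne12 ?_ ?_ ?_
          · exact ⟨fun h => hRS huR (h ▸ hs₂S), hs₁u⟩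
          · exact ⟨fun h => hRS hv₁R (h ▸ hs₂S), hs₁v⟩
          · exact ⟨fun h => hRS hv₂R (h ▸ hs₂S), hs₂v⟩
        · next hb₁ hb₂ =>
          obtain ⟨hs₁S, _, _, _⟩ := hb₁.choose_spec
          rw [heq] at hs₁S
          exact hRS hv₂R hs₁S
        · next hb₁ hb₂ =>
          obtain ⟨hs₂S, _, _, _⟩ := hb₂.choose_spec
          rw [← heq] at hs₂S
          exact hRS hv₁R hs₂S
        · next hb₁ hb₂ => exact hne12 heq
    obtain ⟨l, hllen, hlmem, hlnodup⟩ := exists_pairs @hKsym p hp3 R hRcard hKdeg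
    -- pairs are G-adjacent inside
    have hpairadj : ∀ pr ∈ l, G.Adj pr.1 pr.2 := by
      intro pr hpr
      obtain ⟨h1, h2, h3, h4⟩ := hlmem pr hpr
      by_contra hnadj
      exact h4 ⟨h3, Or.inl hnadj⟩
    have hnobad : ∀ pr ∈ l, ∀ s ∈ S, G.Adj s pr.1 ∨ G.Adj s pr.2 := by
      intro pr hpr s hs
      obtain ⟨h1, h2, h3, h4⟩ := hlmem pr hpr
      by_contra hcon
      push_neg at hcon
      exact h4 ⟨h3, Or.inr ⟨s, hs, hcon.1, hcon.2⟩⟩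
    -- distinctness across pairs
    have hldisj : l.Pairwise (fun pr qr : V × V =>
        pr.1 ≠ qr.1 ∧ pr.1 ≠ qr.2 ∧ pr.2 ≠ qr.1 ∧ pr.2 ≠ qr.2) := by
      have := (List.nodup_flatMap (l₁ := l) (f := fun pr => [pr.1, pr.2])).mp hlnodup
      refine this.2.imp ?_
      intro pr qr hd
      have d11 : pr.1 ≠ qr.1 := fun h => hd (a := pr.1) (by simp) (by simp [h])
      have d12 : pr.1 ≠ qr.2 := fun h => hd (a := pr.1) (by simp) (by simp [h])
      have d21 : pr.2 ≠ qr.1 := fun h => hd (a := pr.2) (by simp) (by simp [h])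
      have d22 : pr.2 ≠ qr.2 := fun h => hd (a := pr.2) (by simp) (by simp [h])
      exact ⟨d11, d12, d21, d22⟩
    refine hasMinor_of_parts G x
      (S.toList.map (fun s => ({s} : Set V)) ++ l.map (fun pr => ({pr.1, pr.2} : Set V)))
      ?_ ?_ ?_ ?_ ?_
    · simp only [List.length_append, List.length_map, Finset.length_toList, hllen]
      omega
    · intro P hP
      rw [List.mem_append] at hP
      rcases hP with hP | hP <;> simp only [List.mem_map] at hP
      · obtain ⟨s, _, rfl⟩ := hP; exact ⟨s, rfl⟩
      · obtain ⟨pr, _, rfl⟩ := hP; exact ⟨pr.1, by simp⟩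
    · intro P hP
      rw [List.mem_append] at hP
      rcases hP with hP | hP <;> simp only [List.mem_map] at hP
      · obtain ⟨s, hs, rfl⟩ := hP
        intro y hy
        rw [Set.mem_singleton_iff] at hy
        subst hy
        exact (G.mem_neighborSet x y).mpr (hmemA (hSA (Finset.mem_toList.mp hs)))
      · obtain ⟨pr, hpr, rfl⟩ := hP
        obtain ⟨h1, h2, h3, h4⟩ := hlmem pr hpr
        intro y hy
        rcases hy with hy | hy
        · rw [hy]; exact (G.mem_neighborSet x pr.1).mpr (hmemA (hRA h1))
        · rw [Set.mem_singleton_iff] at hy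
          rw [hy]
          exact (G.mem_neighborSet x pr.2).mpr (hmemA (hRA h2))
    · intro P hP
      rw [List.mem_append] at hP
      rcases hP with hP | hP <;> simp only [List.mem_map] at hP
      · obtain ⟨s, _, rfl⟩ := hP; exact connected_induce_singleton G s
      · obtain ⟨pr, hpr, rfl⟩ := hP
        exact connected_induce_pair G (hpairadj pr hpr)
    · rw [List.pairwise_append]
      refine ⟨hsingle S (le_refl S), ?_, ?_⟩
      · -- pair-pair
        rw [List.pairwise_map]
        refine List.Pairwise.imp_of_mem ?_ hldisj
        intro pr qr hprl hqrl ⟨d11, d12, d21, d22⟩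
        obtain ⟨p1R, p2R, pne, _⟩ := hlmem pr hprl
        obtain ⟨q1R, q2R, qne, _⟩ := hlmem qr hqrl
        constructor
        · rw [Set.disjoint_left]
          intro a ha hb
          rcases ha with ha | ha <;> rcases hb with hb | hb <;>
            first
              | (subst ha; rw [Set.mem_singleton_iff] at hb; exact d12 hb)
              | skip
          all_goals simp_all
        · -- cross adjacency via maximality
          by_contra hcon
          push_neg at hcon
          obtain ⟨s, hsS, hnadj⟩ := hmaximal pr.1 (hRA p1R) (hRS p1R)
          have h1 : ¬G.Adj pr.1 qr.1 := by
            intro h; exact (hcon pr.1 (by simp) qr.1 (by simp)) h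
          have h2 : ¬G.Adj pr.1 qr.2 := by
            intro h; exact (hcon pr.1 (by simp) qr.2 (by simp)) h
          refine no_three_partners (K := fun a b => a ≠ b ∧ ¬G.Adj a b)
            (hdeg pr.1 (hRA p1R)) (hRA q1R) (hRA q2R) (hSA hsS)
            qne ?_ ?_ ⟨d11, h1⟩ ⟨d12, h2⟩ ⟨?_, hnadj⟩
          · intro h; exact hRS q1R (h ▸ hsS)
          · intro h; exact hRS q2R (h ▸ hsS)
          · intro h; exact hRS p1R (h ▸ hsS)
      · -- single vs pair
        intro P hP Q hQ
        simp only [List.mem_map] at hP hQ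
        obtain ⟨s, hs, rfl⟩ := hP
        obtain ⟨pr, hpr, rfl⟩ := hQ
        have hsS : s ∈ S := Finset.mem_toList.mp hs
        obtain ⟨p1R, p2R, pne, _⟩ := hlmem pr hpr
        constructor
        · rw [Set.disjoint_left]
          intro a ha hb
          rw [Set.mem_singleton_iff] at ha
          subst ha
          rcases hb with hb | hb
          · exact hRS p1R (hb ▸ hsS)
          · rw [Set.mem_singleton_iff] at hb
            exact hRS p2R (hb ▸ hsS)
        · rcases hnobad pr hpr s hsS with h | h
          · exact ⟨s, rfl, pr.1, by simp, h⟩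
          · exact ⟨s, rfl, pr.2, by simp, h⟩
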